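/- With B and ψ the relativised collapsing hierarchy: if α ∈ B(α) then ψ(α+1) = (ψ α)^Γ, the least strongly critical ordinal above ψ(α); and if α ∉ B(α) then ψ(α+1) = ψ(α) and B(α+1) = B(α). -/

import Mathlib

open Ordinal hiding veblen isNormal_veblen veblen_zero_strictMono isNormal_veblen_zero

/-- Old Mathlib `Ordinal.derivBFamily` (removed), restated with its old definition. -/
noncomputable def derivBFamily.{u, v} (o : Ordinal.{u})
    (f : ∀ b < o, Ordinal.{max u v} → Ordinal.{max u v}) :
    Ordinal.{max u v} → Ordinal.{max u v} :=
  derivFamily (familyOfBFamily o f)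

/-- The binary Veblen function: `veblen 0 β = ω ^ β`, and for `α > 0`,
`veblen α` enumerates the common fixed points of `veblen γ` for `γ < α`. -/
noncomputable def veblen : Ordinal → Ordinal → Ordinal :=
  WellFounded.fix Ordinal.lt_wf
    (fun α ih => if α = 0 then fun β => omega0 ^ β
      else derivBFamily.{0,0} α (fun ξ h => ih ξ h))

/-- The set of strongly critical ordinals. -/
def StronglyCritical (γ : Ordinal) : Prop := _root_.veblen γ 0 = γ

/-- `Gamma β` is the `β`-th strongly critical ordinal. -/
noncomputable def Gamma : Ordinal → Ordinal :=
  enumOrd {γ | StronglyCritical γ}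

/-- The least uncountable cardinal (as an ordinal) greater than `θ`. -/
noncomputable def OmegaB (θ : Ordinal) : Ordinal :=
  sInf {o | θ < o ∧ o.card.ord = o ∧ Cardinal.aleph0 < o.card}

/-- Closure of `{0, Ω} ∪ {Γ_β : β ≤ θ}` under `+`, `veblen` and the
given partial collapsing function `f` on arguments below `α`. -/
def closB (θ α : Ordinal) (f : ∀ ξ, ξ < α → Ordinal) : Set Ordinal :=
  ⋂₀ {S : Set Ordinal |
      0 ∈ S ∧ OmegaB θ ∈ S ∧ (∀ β ≤ θ, Gamma β ∈ S) ∧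
      (∀ x ∈ S, ∀ y ∈ S, x + y ∈ S) ∧
      (∀ x ∈ S, ∀ y ∈ S, _root_.veblen x y ∈ S) ∧
      (∀ ξ (h : ξ < α), ξ ∈ S → f ξ h ∈ S)}

/-- The relativised collapsing function `ψ_θ`. -/
noncomputable def psiB (θ : Ordinal) : Ordinal → Ordinal :=
  WellFounded.fix Ordinal.lt_wf
    (fun α ih => sInf {β | β ∉ closB θ α (fun ξ h => ih ξ h)})

/-- The relativised collapsing hierarchy `B_θ(α)`. -/
def BB (θ α : Ordinal) : Set Ordinal :=
  closB θ α (fun ξ _ => psiB θ ξ)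

/-- The least strongly critical ordinal strictly above `δ`. -/
noncomputable def gammaSucc (δ : Ordinal) : Ordinal :=
  sInf {γ | δ < γ ∧ StronglyCritical γ}

set_option linter.deprecated false

noncomputable def nfpBFamily.{u, v} (o : Ordinal.{u})
    (f : ∀ b < o, Ordinal.{max u v} → Ordinal.{max u v}) :
    Ordinal.{max u v} → Ordinal.{max u v} :=
  nfpFamily (familyOfBFamily o f)

theorem isNormal_derivBFamily {o : Ordinal.{0}} (f : ∀ b < o, Ordinal.{0} → Ordinal.{0}) :
    Order.IsNormal (derivBFamily.{0,0} o f) :=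
  isNormal_derivFamily _

theorem derivBFamily_fp {o : Ordinal.{0}} {f : ∀ b < o, Ordinal.{0} → Ordinal.{0}} {i : Ordinal}
    {hi : i < o} (H : Order.IsNormal (f i hi)) (a : Ordinal) :
    f i hi (derivBFamily.{0,0} o f a) = derivBFamily.{0,0} o f a := by
  have := derivFamily_fp (f := familyOfBFamily o f)
    (i := enum (α := o.ToType) (· < ·) ⟨i, hi.trans_eq (type_toType _).symm⟩)
    (by rw [familyOfBFamily_enum]; exact H) a
  rw [familyOfBFamily_enum] at this
  exact this

theorem fp_iff_derivBFamily {o : Ordinal.{0}} {f : ∀ b < o, Ordinal.{0} → Ordinal.{0}}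
    (H : ∀ i hi, Order.IsNormal (f i hi)) {a : Ordinal} :
    (∀ i hi, f i hi a = a) ↔ ∃ b, derivBFamily.{0,0} o f b = a := by
  rw [show derivBFamily.{0,0} o f = derivFamily (familyOfBFamily o f) from rfl,
    ← fp_iff_derivFamily (f := familyOfBFamily o f) (fun j => H _ _)]
  constructor
  · intro h j
    exact h _ _
  · intro h i hi
    have := h (enum (α := o.ToType) (· < ·) ⟨i, hi.trans_eq (type_toType _).symm⟩)
    rwa [familyOfBFamily_enum] at this

theorem nfpBFamily_le_fp {o : Ordinal.{0}} {f : ∀ b < o, Ordinal.{0} → Ordinal.{0}}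
    (H : ∀ i hi, Monotone (f i hi)) {a b : Ordinal} (ab : a ≤ b) (h : ∀ i hi, f i hi b ≤ b) :
    nfpBFamily.{0,0} o f a ≤ b :=
  nfpFamily_le_fp (fun _ => H _ _) ab (fun _ => h _ _)

theorem Cardinal.derivBFamily_lt_ord {o : Ordinal.{0}} {f : ∀ b < o, Ordinal.{0} → Ordinal.{0}}
    {c : Cardinal} (hc : Cardinal.IsRegular c) (ho : o.card < c) (hc' : c ≠ Cardinal.aleph0)
    (hf : ∀ i hi, ∀ b < c.ord, f i hi b < c.ord) {a : Ordinal} :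
    a < c.ord → derivBFamily.{0,0} o f a < c.ord :=
  Cardinal.derivFamily_lt_ord hc (by rwa [Cardinal.mk_toType]) hc' (fun _ => hf _ _)

theorem veblen_def (α : Ordinal) : veblen α = if α = 0 then fun β => omega0 ^ β
    else derivBFamily.{0,0} α (fun ξ _ => veblen ξ) := by
  rw [veblen, WellFounded.fix_eq]

theorem veblen_zero_fn (b : Ordinal) : veblen 0 b = omega0 ^ b := by
  rw [veblen_def]; simp

theorem veblen_pos_def {α : Ordinal} (h : α ≠ 0) :
    veblen α = derivBFamily.{0,0} α (fun ξ _ => veblen ξ) := by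
  rw [veblen_def, if_neg h]

theorem isNormal_veblen (α : Ordinal) : Order.IsNormal (veblen α) := by
  induction α using Ordinal.induction with
  | _ α _ =>
    rw [veblen_def]
    split
    · exact isNormal_opow one_lt_omega0
    · exact isNormal_derivBFamily _

set_option linter.deprecated false

theorem veblen_fp {ξ α : Ordinal} (h : ξ < α) (b : Ordinal) :
    veblen ξ (veblen α b) = veblen α b := by
  have h0 : α ≠ 0 := fun e => by subst e; exact (not_lt_zero h)
  rw [veblen_pos_def h0]
  exact derivBFamily_fp (i := ξ) (hi := h) (isNormal_veblen ξ) b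

theorem exists_veblen_eq {α a : Ordinal} (hα : α ≠ 0) (H : ∀ ξ < α, veblen ξ a = a) :
    ∃ b, veblen α b = a := by
  rw [veblen_pos_def hα]
  exact (fp_iff_derivBFamily (fun ξ _ => isNormal_veblen ξ)).1 (fun ξ h => H ξ h)

theorem veblen_zero_pos (α : Ordinal) : 0 < veblen α 0 := by
  rcases eq_or_ne α 0 with rfl | h
  · rw [veblen_zero_fn]; exact opow_pos _ omega0_pos
  · have := veblen_fp (pos_iff_ne_zero.2 h) 0
    rw [veblen_zero_fn] at this
    calc (0:Ordinal) < omega0 ^ veblen α 0 := opow_pos _ omega0_pos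
    _ = veblen α 0 := this

theorem veblen_zero_strictMono : StrictMono (fun a => veblen a 0) := by
  intro a b hab
  have h1 : veblen a (veblen b 0) = veblen b 0 := veblen_fp hab 0
  calc veblen a 0 < veblen a (veblen b 0) :=
        (isNormal_veblen a).strictMono (veblen_zero_pos b)
  _ = veblen b 0 := h1

theorem derivBFamily_zero' {o : Ordinal} (f : ∀ b < o, Ordinal → Ordinal) :
    derivBFamily.{0,0} o f 0 = nfpBFamily.{0,0} o f 0 := by
  rw [derivBFamily, derivFamily_zero]; rfl

theorem isNormal_veblen_zero : Order.IsNormal (fun a => veblen a 0) := by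
  rw [Order.isNormal_iff]
  refine ⟨veblen_zero_strictMono, fun o ho a ha => ?_⟩
  have hne : Nonempty (Set.Iio o) := ⟨⟨0, ho.pos⟩⟩
  set s : Ordinal := ⨆ b : Set.Iio o, veblen b.1 0 with hs
  have hsle : s ≤ a := Ordinal.iSup_le fun b => ha b.1 b.2
  refine le_trans ?_ hsle
  have h0 : o ≠ 0 := ho.pos.ne'
  show veblen o 0 ≤ s
  rw [veblen_pos_def h0, derivBFamily_zero']
  refine nfpBFamily_le_fp (fun ξ _ => (isNormal_veblen ξ).monotone) (zero_le) ?_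
  intro ξ hξ
  -- veblen ξ s ≤ s
  rw [hs, (isNormal_veblen ξ).map_iSup bddAbove_of_small]
  refine Ordinal.iSup_le fun b => ?_
  have hc : max b.1 ξ + 1 < o := by
    have : max b.1 ξ < o := max_lt b.2 hξ
    simpa using ho.succ_lt this
  have h1 : veblen b.1 0 ≤ veblen (max b.1 ξ + 1) 0 := by
    rcases eq_or_lt_of_le (le_max_left b.1 ξ) with h | h
    · exact (veblen_zero_strictMono.monotone (h.le.trans (le_of_lt (lt_add_one _))))
    · exact (veblen_zero_strictMono (h.trans (lt_add_one _))).le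
  have h2 : veblen ξ (veblen (max b.1 ξ + 1) 0) = veblen (max b.1 ξ + 1) 0 :=
    veblen_fp (lt_of_le_of_lt (le_max_right _ _) (lt_add_one _)) 0
  calc veblen ξ (veblen b.1 0) ≤ veblen ξ (veblen (max b.1 ξ + 1) 0) :=
        (isNormal_veblen ξ).monotone h1
  _ = veblen (max b.1 ξ + 1) 0 := h2
  _ ≤ s := Ordinal.le_iSup (fun b : Set.Iio o => veblen b.1 0) ⟨_, hc⟩

-- ### strongly critical basics
theorem sc_unbounded : ¬ BddAbove {γ | StronglyCritical γ} := by
  rw [not_bddAbove_iff]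
  intro x
  refine ⟨nfp (fun a => veblen a 0) (x+1), ?_, ?_⟩
  · exact nfp_fp isNormal_veblen_zero _
  · exact lt_of_lt_of_le (lt_add_one x) (le_nfp _ _)

theorem sc_pos {γ : Ordinal} (h : StronglyCritical γ) : 0 < γ :=
  h ▸ veblen_zero_pos γ

theorem sc_veblen_fixed {γ ξ : Ordinal} (h : StronglyCritical γ) (hξ : ξ < γ) :
    veblen ξ γ = γ := by
  conv_lhs => rw [← h]
  rw [veblen_fp hξ 0, h]

theorem sc_omega0_opow {γ : Ordinal} (h : StronglyCritical γ) : omega0 ^ γ = γ := by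
  rw [← veblen_zero_fn]; exact sc_veblen_fixed h (sc_pos h)

theorem sc_add_lt {γ x y : Ordinal} (h : StronglyCritical γ) (hx : x < γ) (hy : y < γ) :
    x + y < γ := by
  rw [← sc_omega0_opow h] at hx hy ⊢
  exact isPrincipal_add_omega0_opow _ hx hy

theorem sc_veblen_lt {γ a b : Ordinal} (h : StronglyCritical γ) (ha : a < γ) (hb : b < γ) :
    veblen a b < γ := by
  calc veblen a b < veblen a γ := (isNormal_veblen a).strictMono hb
  _ = γ := sc_veblen_fixed h ha

theorem sc_of_veblen_self {δ b : Ordinal} (h : veblen δ b = δ) : StronglyCritical δ := by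
  have h1 : veblen δ 0 ≤ δ := by
    conv_rhs => rw [← h]
    exact (isNormal_veblen δ).monotone (zero_le)
  exact le_antisymm h1 (veblen_zero_strictMono.le_apply)

-- ### decomposition
theorem veblen_decomp {δ : Ordinal} (h0 : δ ≠ 0) (hsc : ¬ StronglyCritical δ) :
    (∃ x < δ, ∃ y < δ, x + y = δ) ∨ (∃ a < δ, ∃ b < δ, veblen a b = δ) := by
  by_cases hp : IsPrincipal (· + ·) δ
  · right
    rcases isPrincipal_add_iff_zero_or_omega0_opow.1 hp with rfl | ⟨b, hb⟩
    · exact absurd rfl h0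
    simp only [] at hb
    rcases lt_or_eq_of_le (right_le_opow b one_lt_omega0 : b ≤ omega0 ^ b) with hlt | heq
    · rw [hb] at hlt
      exact ⟨0, pos_iff_ne_zero.2 h0, b, hlt, by rw [veblen_zero_fn]; exact hb⟩
    · -- δ = ω ^ δ, i.e. veblen 0 δ = δ
      have hfix0 : veblen 0 δ = δ := by rw [veblen_zero_fn, ← hb, ← heq]; exact heq.symm
      have hδδ : veblen δ δ ≠ δ := fun h => hsc (sc_of_veblen_self h)
      set s := sInf {a | veblen a δ ≠ δ} with hsdef
      have hne : {a | veblen a δ ≠ δ}.Nonempty := ⟨δ, hδδ⟩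
      have hsmem : veblen s δ ≠ δ := csInf_mem hne
      have hbelow : ∀ a < s, veblen a δ = δ := by
        intro a haw
        by_contra hc
        exact absurd (csInf_le' (s := {a | veblen a δ ≠ δ}) hc) (not_le.2 haw)
      have hs0 : s ≠ 0 := fun e => hsmem (e ▸ hfix0)
      obtain ⟨b', hb'⟩ := exists_veblen_eq hs0 hbelow
      have hbd : b' ≤ δ := hb' ▸ (isNormal_veblen s).strictMono.le_apply
      have hbne : b' ≠ δ := fun e => hsmem (e ▸ hb')
      have hsd : s ≤ δ := by
        by_contra hc
        exact hδδ (hbelow δ (not_le.1 hc))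
      have hsne : s ≠ δ := by
        intro e
        exact hsc (sc_of_veblen_self (e ▸ hb'))
      exact ⟨s, lt_of_le_of_ne hsd hsne, b', lt_of_le_of_ne hbd hbne, hb'⟩
  · left
    exact exists_lt_add_of_not_isPrincipal_add hp

theorem mem_of_closed {S : Set Ordinal} (h0 : 0 ∈ S)
    (hadd : ∀ x ∈ S, ∀ y ∈ S, x + y ∈ S) (hveb : ∀ x ∈ S, ∀ y ∈ S, veblen x y ∈ S) :
    ∀ δ, (∀ δ' ≤ δ, StronglyCritical δ' → δ' ∈ S) → δ ∈ S := by
  intro δ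
  induction δ using Ordinal.induction with
  | _ δ IH =>
    intro hsc
    rcases eq_or_ne δ 0 with rfl | hδ0
    · exact h0
    by_cases hS : StronglyCritical δ
    · exact hsc δ le_rfl hS
    rcases veblen_decomp hδ0 hS with ⟨x, hx, y, hy, hxy⟩ | ⟨a, ha, b, hb, hab⟩
    · have hxm := IH x hx (fun d hd => hsc d (hd.trans hx.le))
      have hym := IH y hy (fun d hd => hsc d (hd.trans hy.le))
      exact hxy ▸ hadd x hxm y hym
    · have ham := IH a ha (fun d hd => hsc d (hd.trans ha.le))
      have hbm := IH b hb (fun d hd => hsc d (hd.trans hb.le))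
      exact hab ▸ hveb a ham b hbm

-- ### closB basics
section closBlemmas
variable {θ α : Ordinal} {f : ∀ ξ, ξ < α → Ordinal}

theorem closB_zero_mem : (0:Ordinal) ∈ closB θ α f :=
  fun _ hS => hS.1

theorem closB_omega_mem : OmegaB θ ∈ closB θ α f :=
  fun _ hS => hS.2.1

theorem closB_gamma_mem {β : Ordinal} (h : β ≤ θ) : Gamma β ∈ closB θ α f :=
  fun _ hS => hS.2.2.1 β h

theorem closB_add_mem {x y : Ordinal} (hx : x ∈ closB θ α f) (hy : y ∈ closB θ α f) :
    x + y ∈ closB θ α f :=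
  fun S hS => hS.2.2.2.1 x (hx S hS) y (hy S hS)

theorem closB_veblen_mem {x y : Ordinal} (hx : x ∈ closB θ α f) (hy : y ∈ closB θ α f) :
    veblen x y ∈ closB θ α f :=
  fun S hS => hS.2.2.2.2.1 x (hx S hS) y (hy S hS)

theorem closB_f_mem {ξ : Ordinal} (h : ξ < α) (hξ : ξ ∈ closB θ α f) :
    f ξ h ∈ closB θ α f :=
  fun S hS => hS.2.2.2.2.2 ξ h (hξ S hS)

theorem closB_subset {S : Set Ordinal} (h0 : 0 ∈ S) (hΩ : OmegaB θ ∈ S)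
    (hΓ : ∀ β ≤ θ, Gamma β ∈ S) (hadd : ∀ x ∈ S, ∀ y ∈ S, x + y ∈ S)
    (hveb : ∀ x ∈ S, ∀ y ∈ S, veblen x y ∈ S)
    (hf : ∀ ξ (h : ξ < α), ξ ∈ S → f ξ h ∈ S) :
    closB θ α f ⊆ S :=
  Set.sInter_subset_of_mem ⟨h0, hΩ, hΓ, hadd, hveb, hf⟩

theorem gamma_mem_closB {δ : Ordinal} (h : δ ≤ Gamma θ) : δ ∈ closB θ α f := by
  refine mem_of_closed closB_zero_mem (fun x hx y hy => closB_add_mem hx hy)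
    (fun x hx y hy => closB_veblen_mem hx hy) δ ?_
  intro δ' hδ' hsc
  obtain ⟨β, hβ⟩ := enumOrd_surjective sc_unbounded hsc
  have hβθ : β ≤ θ := by
    have := (enumOrd_le_enumOrd sc_unbounded (a := β) (b := θ)).1
    exact this (by rw [hβ]; exact hδ'.trans h)
  exact hβ ▸ closB_gamma_mem hβθ

end closBlemmas

theorem BB_mono {θ ξ α : Ordinal} (h : ξ ≤ α) : BB θ ξ ⊆ BB θ α := by
  intro x hx S hS
  refine hx S ⟨hS.1, hS.2.1, hS.2.2.1, hS.2.2.2.1, hS.2.2.2.2.1, ?_⟩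
  exact fun ζ hζ hm => hS.2.2.2.2.2 ζ (hζ.trans_le h) hm

theorem psiB_def (θ α : Ordinal) : psiB θ α = sInf {β | β ∉ BB θ α} := by
  rw [psiB, WellFounded.fix_eq]
  rfl

-- ### OmegaB basics
noncomputable def kappaB (θ : Ordinal) : Cardinal := max (Cardinal.aleph 1) (Order.succ θ.card)

theorem OmegaB_eq (θ : Ordinal) : OmegaB θ = (kappaB θ).ord := by
  apply le_antisymm
  · apply csInf_le'
    refine ⟨?_, ?_, ?_⟩
    · rw [Cardinal.lt_ord]
      exact lt_of_lt_of_le (Order.lt_succ _) (le_max_right _ _)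
    · rw [Cardinal.card_ord]
    · rw [Cardinal.card_ord]
      exact lt_of_lt_of_le Cardinal.aleph0_lt_aleph_one (le_max_left _ _)
  · refine le_csInf ⟨(kappaB θ).ord, ?_, ?_, ?_⟩ ?_
    · rw [Cardinal.lt_ord]
      exact lt_of_lt_of_le (Order.lt_succ _) (le_max_right _ _)
    · rw [Cardinal.card_ord]
    · rw [Cardinal.card_ord]
      exact lt_of_lt_of_le Cardinal.aleph0_lt_aleph_one (le_max_left _ _)
    · rintro o ⟨h1, h2, h3⟩
      have hc : kappaB θ ≤ o.card := by
        refine max_le ?_ ?_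
        · rw [← Cardinal.succ_aleph0, Order.succ_le_iff]
          exact h3
        · rw [Order.succ_le_iff]
          rw [← h2, Cardinal.lt_ord] at h1
          exact h1
      calc (kappaB θ).ord ≤ o.card.ord := Cardinal.ord_le_ord.2 hc
      _ = o := h2

theorem OmegaB_card (θ : Ordinal) : (OmegaB θ).card = kappaB θ := by
  rw [OmegaB_eq, Cardinal.card_ord]

theorem OmegaB_card_ord (θ : Ordinal) : (OmegaB θ).card.ord = OmegaB θ := by
  rw [OmegaB_card, ← OmegaB_eq]

theorem kappaB_regular (θ : Ordinal) : Cardinal.IsRegular (kappaB θ) := by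
  rcases le_total (Cardinal.aleph 1) (Order.succ θ.card) with h | h
  · rw [kappaB, max_eq_right h]
    apply Cardinal.isRegular_succ
    rw [← Cardinal.succ_aleph0] at h
    exact Order.succ_le_succ_iff.1 h
  · rw [kappaB, max_eq_left h]
    exact Cardinal.isRegular_aleph_one

theorem aleph0_lt_kappaB (θ : Ordinal) : Cardinal.aleph0 < kappaB θ :=
  lt_of_lt_of_le Cardinal.aleph0_lt_aleph_one (le_max_left _ _)

theorem theta_lt_OmegaB (θ : Ordinal) : θ < OmegaB θ := by
  rw [OmegaB_eq, Cardinal.lt_ord]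
  exact lt_of_lt_of_le (Order.lt_succ _) (le_max_right _ _)

theorem theta_card_lt_kappaB (θ : Ordinal) : θ.card < kappaB θ :=
  lt_of_lt_of_le (Order.lt_succ _) (le_max_right _ _)

-- ### closure of OmegaB under veblen
theorem omega0_opow_lt_ord {c : Cardinal} (hreg : Cardinal.IsRegular c)
    (hc : Cardinal.aleph0 < c) : ∀ {b : Ordinal}, b < c.ord → omega0 ^ b < c.ord := by
  intro b
  induction b using limitRecOn with
  | zero =>
    intro _
    rw [opow_zero, Cardinal.lt_ord]
    simpa using lt_trans Cardinal.one_lt_aleph0 hc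
  | add_one b IH =>
    intro hb
    have hb' : b < c.ord := lt_trans (Order.lt_succ b) hb
    rw [opow_add_one, Cardinal.lt_ord, card_mul, card_omega0]
    exact Cardinal.mul_lt_of_lt hreg.1 (Cardinal.lt_ord.1 (IH hb')) hc
  | limit b hlim IH =>
    intro hb
    rw [opow_limit omega0_ne_zero hlim]
    apply Ordinal.lift_iSup_lt_of_lt_cof
    · rwa [← lift_cof, hreg.cof_ord, Cardinal.mk_Iio_ordinal, Cardinal.lift_lift, Cardinal.lift_lt,
        ← Cardinal.lt_ord]
    · exact fun i => IH i.1 i.2 (i.2.trans hb)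

theorem veblen_lt_OmegaB (θ : Ordinal) :
    ∀ a, a < OmegaB θ → ∀ b < OmegaB θ, veblen a b < OmegaB θ := by
  intro a
  induction a using Ordinal.induction with
  | _ a IH =>
    intro ha b hb
    rcases eq_or_ne a 0 with rfl | ha0
    · rw [veblen_zero_fn]
      rw [OmegaB_eq] at hb ⊢
      exact omega0_opow_lt_ord (kappaB_regular θ) (aleph0_lt_kappaB θ) hb
    · rw [veblen_pos_def ha0]
      rw [OmegaB_eq] at ha hb ⊢
      refine Cardinal.derivBFamily_lt_ord (kappaB_regular θ) (Cardinal.lt_ord.1 ha)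
        (aleph0_lt_kappaB θ).ne' ?_ hb
      intro ξ hξ x hx
      rw [← OmegaB_eq] at hx ⊢
      exact IH ξ hξ (by rw [OmegaB_eq]; exact hξ.trans ha) x hx

theorem exists_sc_between (θ : Ordinal) {x : Ordinal} (hx : x < OmegaB θ) :
    ∃ γ, x < γ ∧ γ < OmegaB θ ∧ StronglyCritical γ := by
  refine ⟨nfp (fun a => veblen a 0) (x + 1), ?_, ?_, ?_⟩
  · exact lt_of_lt_of_le (lt_add_one x) (le_nfp _ _)
  · rw [OmegaB_eq]
    refine Cardinal.nfp_lt_ord_of_isRegular (kappaB_regular θ) (aleph0_lt_kappaB θ).ne' ?_ ?_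
    · intro i hi
      rw [← OmegaB_eq] at hi ⊢
      exact veblen_lt_OmegaB θ i hi 0 (lt_of_le_of_lt (zero_le) hi)
    · rw [← OmegaB_eq]
      have hlim : Order.IsSuccLimit (OmegaB θ) := by
        rw [OmegaB_eq]
        exact Cardinal.isSuccLimit_ord (kappaB_regular θ).1
      simpa using hlim.succ_lt hx
  · exact nfp_fp isNormal_veblen_zero _

-- ### cardinality of closB
noncomputable def stageB (θ α : Ordinal) (f : ∀ ξ, ξ < α → Ordinal) : ℕ → Set Ordinal
  | 0 => {0, OmegaB θ} ∪ Gamma '' Set.Iic θ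
  | n + 1 =>
    stageB θ α f n ∪ Set.image2 (· + ·) (stageB θ α f n) (stageB θ α f n)
      ∪ Set.image2 veblen (stageB θ α f n) (stageB θ α f n)
      ∪ (fun ξ => if h : ξ < α then f ξ h else 0) '' stageB θ α f n

theorem stageB_mono {θ α : Ordinal} {f : ∀ ξ, ξ < α → Ordinal} {m n : ℕ} (h : m ≤ n) :
    stageB θ α f m ⊆ stageB θ α f n := by
  induction n with
  | zero => rw [Nat.le_zero.1 h]
  | succ n IH =>
    rcases Nat.le_succ_iff.1 h  with h' | rfl
    · exact (IH h').trans
        (by intro x hx; exact Set.mem_union_left _ (Set.mem_union_left _ (Set.mem_union_left _ hx)))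
    · rfl

theorem closB_subset_iUnion_stageB (θ α : Ordinal) (f : ∀ ξ, ξ < α → Ordinal) :
    closB θ α f ⊆ ⋃ n : ℕ, stageB θ α f n := by
  apply closB_subset
  · exact Set.mem_iUnion.2 ⟨0, Or.inl (Or.inl rfl)⟩
  · exact Set.mem_iUnion.2 ⟨0, Or.inl (Or.inr rfl)⟩
  · exact fun β hβ => Set.mem_iUnion.2 ⟨0, Or.inr ⟨β, hβ, rfl⟩⟩
  · intro x hx y hy
    obtain ⟨m, hm⟩ := Set.mem_iUnion.1 hx
    obtain ⟨n, hn⟩ := Set.mem_iUnion.1 hy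
    refine Set.mem_iUnion.2 ⟨max m n + 1, ?_⟩
    exact Set.mem_union_left _ (Set.mem_union_left _ (Set.mem_union_right _
      (Set.mem_image2_of_mem (stageB_mono (le_max_left m n) hm)
        (stageB_mono (le_max_right m n) hn))))
  · intro x hx y hy
    obtain ⟨m, hm⟩ := Set.mem_iUnion.1 hx
    obtain ⟨n, hn⟩ := Set.mem_iUnion.1 hy
    refine Set.mem_iUnion.2 ⟨max m n + 1, ?_⟩
    exact Set.mem_union_left _ (Set.mem_union_right _
      (Set.mem_image2_of_mem (stageB_mono (le_max_left m n) hm)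
        (stageB_mono (le_max_right m n) hn)))
  · intro ξ h hξ
    obtain ⟨n, hn⟩ := Set.mem_iUnion.1 hξ
    refine Set.mem_iUnion.2 ⟨n + 1, Set.mem_union_right _ ⟨ξ, hn, ?_⟩⟩
    simp only [dif_pos h]

open Cardinal in
theorem mk_stageB_le (θ α : Ordinal) (f : ∀ ξ, ξ < α → Ordinal) (n : ℕ) :
    #(stageB θ α f n) ≤ Cardinal.lift.{1} (max θ.card Cardinal.aleph0) := by
  set K := Cardinal.lift.{1} (max θ.card Cardinal.aleph0) with hK
  have hKinf : Cardinal.aleph0 ≤ K := by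
    rw [hK, ← Cardinal.lift_aleph0.{1,0}]
    exact Cardinal.lift_le.2 (le_max_right _ _)
  induction n with
  | zero =>
    refine le_trans (Cardinal.mk_union_le _ _) ?_
    refine Cardinal.add_le_of_le hKinf ?_ ?_
    · refine le_trans Cardinal.mk_insert_le ?_
      refine Cardinal.add_le_of_le hKinf ?_ ?_
      · simpa using Cardinal.one_le_aleph0.trans hKinf
      · exact Cardinal.one_le_aleph0.trans hKinf
    · refine le_trans Cardinal.mk_image_le ?_
      have : Set.Iic θ = Set.Iio (θ + 1) := by
        ext x; simp [Order.lt_add_one_iff]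
      rw [this, Cardinal.mk_Iio_ordinal, hK]
      apply Cardinal.lift_le.2
      rw [add_one_eq_succ, card_succ]
      refine Cardinal.add_le_of_le (le_max_right _ _) (le_max_left _ _) ?_
      exact Cardinal.one_le_aleph0.trans (le_max_right _ _)
  | succ n IH =>
    have himg2 : ∀ g : Ordinal → Ordinal → Ordinal,
        #(Set.image2 g (stageB θ α f n) (stageB θ α f n)) ≤ K := by
      intro g
      refine le_trans Cardinal.mk_image2_le ?_
      calc #(stageB θ α f n) * #(stageB θ α f n) ≤ K * K := mul_le_mul' IH IH
      _ = K := Cardinal.mul_eq_self hKinf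
    refine le_trans (Cardinal.mk_union_le _ _) (Cardinal.add_le_of_le hKinf ?_ ?_)
    · refine le_trans (Cardinal.mk_union_le _ _) (Cardinal.add_le_of_le hKinf ?_ ?_)
      · exact le_trans (Cardinal.mk_union_le _ _) (Cardinal.add_le_of_le hKinf IH (himg2 _))
      · exact himg2 _
    · exact le_trans Cardinal.mk_image_le IH

open Cardinal in
theorem exists_notMem_closB (θ α : Ordinal) (f : ∀ ξ, ξ < α → Ordinal) :
    ∃ x, x < OmegaB θ ∧ x ∉ closB θ α f := by
  by_contra hc
  push_neg at hc
  have hsub : Set.Iio (OmegaB θ) ⊆ ⋃ n : ℕ, stageB θ α f n := fun x hx =>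
    closB_subset_iUnion_stageB θ α f (hc x hx)
  have h1 : #(Set.Iio (OmegaB θ)) ≤ #(⋃ n : ℕ, stageB θ α f n) :=
    Cardinal.mk_le_mk_of_subset hsub
  have h2 : #(⋃ n : ℕ, stageB θ α f n) ≤ Cardinal.lift.{1} (max θ.card Cardinal.aleph0) := by
    have := Cardinal.mk_iUnion_le_lift (f := fun n : ℕ => stageB θ α f n)
    rw [Cardinal.lift_id'] at this
    refine le_trans this ?_
    set K := Cardinal.lift.{1} (max θ.card Cardinal.aleph0) with hK
    have hKinf : Cardinal.aleph0 ≤ K := by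
      rw [hK, ← Cardinal.lift_aleph0.{1,0}]
      exact Cardinal.lift_le.2 (le_max_right _ _)
    have hA : Cardinal.lift.{1} #ℕ ≤ K := by
      rw [Cardinal.mk_nat, Cardinal.lift_aleph0]
      exact hKinf
    have hB : ⨆ n : ℕ, Cardinal.lift.{0} #(stageB θ α f n) ≤ K := by
      refine ciSup_le fun n => ?_
      rw [Cardinal.lift_id']
      exact mk_stageB_le θ α f n
    calc Cardinal.lift.{1} #ℕ * ⨆ n : ℕ, Cardinal.lift.{0} #(stageB θ α f n)
        ≤ K * K := mul_le_mul' hA hB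
    _ = K := Cardinal.mul_eq_self hKinf
  have h3 : #(Set.Iio (OmegaB θ)) = Cardinal.lift.{1} (OmegaB θ).card := Cardinal.mk_Iio_ordinal _
  have h4 : Cardinal.lift.{1} (OmegaB θ).card ≤ Cardinal.lift.{1} (max θ.card Cardinal.aleph0) :=
    h3 ▸ (h1.trans h2)
  rw [Cardinal.lift_le, OmegaB_card] at h4
  have h5 : max θ.card Cardinal.aleph0 < kappaB θ :=
    max_lt (theta_card_lt_kappaB θ) (aleph0_lt_kappaB θ)
  exact absurd h4 (not_le.2 h5)

-- ### psiB basics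
theorem BB_compl_nonempty (θ α : Ordinal) : {β | β ∉ BB θ α}.Nonempty := by
  obtain ⟨x, -, hx⟩ := exists_notMem_closB θ α (fun ξ _ => psiB θ ξ)
  exact ⟨x, hx⟩

theorem psiB_not_mem (θ α : Ordinal) : psiB θ α ∉ BB θ α := by
  rw [psiB_def]
  exact csInf_mem (BB_compl_nonempty θ α)

theorem psiB_lt_OmegaB (θ α : Ordinal) : psiB θ α < OmegaB θ := by
  obtain ⟨x, hx1, hx2⟩ := exists_notMem_closB θ α (fun ξ _ => psiB θ ξ)
  rw [psiB_def]
  exact lt_of_le_of_lt (csInf_le' hx2) hx1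

theorem mem_BB_of_lt_psiB {θ α x : Ordinal} (h : x < psiB θ α) : x ∈ BB θ α := by
  by_contra hc
  rw [psiB_def] at h
  exact absurd (csInf_le' (show x ∈ {β | β ∉ BB θ α} from hc)) (not_le.2 h)

theorem psiB_mono {θ ξ α : Ordinal} (h : ξ ≤ α) : psiB θ ξ ≤ psiB θ α := by
  rw [psiB_def θ ξ]
  refine csInf_le' ?_
  intro hc
  exact psiB_not_mem θ α (BB_mono h hc)

theorem Gamma_theta_lt_psiB (θ α : Ordinal) : Gamma θ < psiB θ α := by
  by_contra hc
  exact psiB_not_mem θ α (gamma_mem_closB (not_lt.1 hc))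

-- ### gammaSucc basics
theorem gammaSucc_spec (δ : Ordinal) :
    δ < gammaSucc δ ∧ StronglyCritical (gammaSucc δ) := by
  have hne : {γ | δ < γ ∧ StronglyCritical γ}.Nonempty := by
    obtain ⟨y, hy, hyd⟩ := not_bddAbove_iff.1 sc_unbounded δ
    exact ⟨y, hyd, hy⟩
  exact csInf_mem hne

theorem gammaSucc_le {δ γ : Ordinal} (h1 : δ < γ) (h2 : StronglyCritical γ) :
    gammaSucc δ ≤ γ :=
  csInf_le' ⟨h1, h2⟩

theorem stmt14 (θ α : Ordinal) :
    (α ∈ BB θ α → psiB θ (α + 1) = gammaSucc (psiB θ α)) ∧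
    (α ∉ BB θ α → psiB θ (α + 1) = psiB θ α ∧ BB θ (α + 1) = BB θ α) := by
  constructor
  · intro hα
    obtain ⟨hψγ, hγsc⟩ := gammaSucc_spec (psiB θ α)
    set ψ := psiB θ α with hψdef
    set γ := gammaSucc ψ with hγdef
    obtain ⟨γ', hγ'1, hγ'2, hγ'3⟩ := exists_sc_between θ (psiB_lt_OmegaB θ α)
    have hγΩ : γ < OmegaB θ := lt_of_le_of_lt (gammaSucc_le hγ'1 hγ'3) hγ'2
    have hΓγ : Gamma θ < γ := (Gamma_theta_lt_psiB θ α).trans hψγ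
    have hαmem : α ∈ BB θ (α + 1) := BB_mono (le_of_lt (lt_add_one α)) hα
    have hψmem : ψ ∈ BB θ (α + 1) :=
      closB_f_mem (f := fun ξ _ => psiB θ ξ) (lt_add_one α) hαmem
    have hγnot : γ ∉ BB θ (α + 1) := by
      intro hmem
      have hsub : BB θ (α + 1) ⊆ {x | x ≠ γ} := by
        apply closB_subset
        · exact (sc_pos hγsc).ne
        · exact (ne_of_gt hγΩ)
        · intro β hβ
          exact ne_of_lt (lt_of_le_of_lt ((enumOrd_le_enumOrd sc_unbounded).2 hβ) hΓγ)
        · intro x hx y hy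
          show x + y ≠ γ
          intro hxy
          rcases lt_trichotomy x γ with h1 | h1 | h1
          · rcases lt_trichotomy y γ with h2 | h2 | h2
            · exact absurd hxy (sc_add_lt hγsc h1 h2).ne
            · exact hy h2
            · have : y ≤ x + y := le_add_self
              rw [hxy] at this
              exact absurd this (not_le.2 h2)
          · exact hx h1
          · have : x ≤ x + y := le_self_add
            rw [hxy] at this
            exact absurd this (not_le.2 h1)
        · intro x hx y hy
          show veblen x y ≠ γ
          intro hxy
          rcases lt_trichotomy x γ with h1 | h1 | h1
          · have hfix : veblen x γ = γ := sc_veblen_fixed hγsc h1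
            have : veblen x y = veblen x γ := by rw [hxy, hfix]
            exact hy ((isNormal_veblen x).strictMono.injective this)
          · exact hx h1
          · have h2 : γ < veblen x 0 := by
              calc γ = veblen γ 0 := hγsc.symm
              _ < veblen x 0 := veblen_zero_strictMono h1
            have h3 : veblen x 0 ≤ veblen x y := (isNormal_veblen x).monotone (zero_le)
            rw [hxy] at h3
            exact absurd (h2.trans_le h3) (lt_irrefl γ)
        · intro ξ hξ _
          show psiB θ ξ ≠ γ
          have hle : ξ ≤ α := by rwa [add_one_eq_succ, Order.lt_succ_iff] at hξ
          exact ne_of_lt (lt_of_le_of_lt (psiB_mono hle) hψγ)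
      exact (hsub hmem) rfl
    have hIio : ∀ δ < γ, δ ∈ BB θ (α + 1) := by
      intro δ hδ
      refine mem_of_closed closB_zero_mem (fun x hx y hy => closB_add_mem hx hy)
        (fun x hx y hy => closB_veblen_mem hx hy) δ ?_
      intro δ' hδ'δ hsc'
      have hδ'γ : δ' < γ := lt_of_le_of_lt hδ'δ hδ
      have h1 : δ' ≤ ψ := by
        by_contra hc
        exact absurd (gammaSucc_le (not_le.1 hc) hsc') (not_le.2 hδ'γ)
      rcases lt_or_eq_of_le h1 with h | rfl
      · exact BB_mono (le_of_lt (lt_add_one α)) (mem_BB_of_lt_psiB h)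
      · exact hψmem
    rw [psiB_def]
    apply le_antisymm
    · exact csInf_le' (show γ ∈ {β | β ∉ BB θ (α + 1)} from hγnot)
    · refine le_csInf ⟨γ, hγnot⟩ ?_
      intro b hb
      by_contra hc
      exact hb (hIio b (not_le.1 hc))
  · intro hα
    have hBB : BB θ (α + 1) = BB θ α := by
      apply Set.Subset.antisymm
      · intro x hx
        refine hx (BB θ α) ⟨closB_zero_mem, closB_omega_mem, fun β hβ => closB_gamma_mem hβ,
          fun a ha b hb => closB_add_mem ha hb, fun a ha b hb => closB_veblen_mem ha hb, ?_⟩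
        intro ξ hξ hmem
        have hle : ξ ≤ α := by rwa [add_one_eq_succ, Order.lt_succ_iff] at hξ
        rcases lt_or_eq_of_le hle with h | rfl
        · exact closB_f_mem (f := fun ξ _ => psiB θ ξ) h hmem
        · exact absurd hmem hα
      · exact BB_mono (le_of_lt (lt_add_one α))
    exact ⟨by rw [psiB_def, psiB_def, hBB], hBB⟩
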